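/- arXiv:2209.14502 — 2 statements merged into one kernel-verified Lean document; each statement's English description precedes it below -/
import Mathlib

section
/- Differentiability of the one-dimensional expected check loss: let m be a probability measure on ℝ with ∫ |e| dm(e) < ∞, and define ψ(t) := ∫ ρ_τ(e − t) dm(e). If m({t₀}) = 0, then ψ is differentiable at t₀ with derivative ψ′(t₀) = m((−∞, t₀]) − τ. -/
open MeasureTheory

/-- The check (pinball) loss function `ρ_τ(u) = u (τ - 1{u ≤ 0})`. -/
noncomputable def checkFn (τ u : ℝ) : ℝ := u * (τ - if u ≤ 0 then 1 else 0)

lemma checkFn_lip {τ : ℝ} (hτ : τ ∈ Set.Ioo (0 : ℝ) 1) :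
    LipschitzWith 1 (checkFn τ) := by
  obtain ⟨h0, h1⟩ := hτ
  apply LipschitzWith.of_dist_le_mul
  intro u v
  rw [Real.dist_eq, Real.dist_eq, NNReal.coe_one, one_mul]
  unfold checkFn
  split_ifs with h1 h2 h2 <;>
  · rw [abs_le]
    constructor <;> cases abs_cases (u - v) <;> nlinarith

lemma checkFn_measurable (τ : ℝ) : Measurable (checkFn τ) := by
  unfold checkFn
  exact measurable_id.mul ((measurable_const.sub
    (Measurable.ite measurableSet_Iic measurable_const measurable_const)))

/-- Differentiability of the one-dimensional expected check loss.  If `m` is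
a probability measure on `ℝ` with `∫|e| dm < ∞` and `m({t₀}) = 0`, then
`ψ(t) = ∫ ρ_τ(e − t) dm(e)` is differentiable at `t₀` with `ψ′(t₀) = m((−∞,t₀]) − τ`. -/
theorem expected_check_loss_deriv (τ : ℝ) (hτ : τ ∈ Set.Ioo (0 : ℝ) 1)
    (m : Measure ℝ) [IsProbabilityMeasure m]
    (hmom : Integrable (fun e => |e|) m)
    (t₀ : ℝ) (ht₀ : m {t₀} = 0) :
    HasDerivAt (fun t => ∫ e, checkFn τ (e - t) ∂m)
      ((m (Set.Iic t₀)).toReal - τ) t₀ := by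
  set F : ℝ → ℝ → ℝ := fun t e => checkFn τ (e - t) with hF
  set F' : ℝ → ℝ := fun e => (if e ≤ t₀ then 1 else 0) - τ with hF'
  have key := hasDerivAt_integral_of_dominated_loc_of_lip (μ := m) (F := F) (F' := F')
    (x₀ := t₀) (s := Metric.ball t₀ 1) (bound := fun _ => (1 : ℝ)) (Metric.ball_mem_nhds t₀ one_pos)
    (Filter.Eventually.of_forall fun t =>
      (((checkFn_measurable τ).comp (measurable_id.sub measurable_const)).aestronglyMeasurable))
    ?_ ?_ ?_ (integrable_const 1) ?_
  · have hint : ∫ e, F' e ∂m = (m (Set.Iic t₀)).toReal - τ := by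
      rw [hF']
      have h1 : Integrable (fun e => if e ≤ t₀ then (1:ℝ) else 0) m := by
        refine ((integrable_const (1:ℝ)).indicator (measurableSet_Iic (a := t₀))).congr
          (ae_of_all _ fun e => ?_)
        simp [Set.indicator_apply, Set.mem_Iic]
      rw [integral_sub h1 (integrable_const τ), integral_const, measureReal_def, measure_univ,
        ENNReal.toReal_one, one_smul]
      congr 1
      have : (fun e => if e ≤ t₀ then (1:ℝ) else 0) =
          Set.indicator (Set.Iic t₀) (fun _ => (1:ℝ)) := by
        ext e; simp [Set.indicator_apply, Set.mem_Iic]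
      rw [this, integral_indicator (measurableSet_Iic), integral_const, measureReal_def, smul_eq_mul, mul_one,
        Measure.restrict_apply_univ]
    rw [← hint]
    exact key.2
  · -- integrable F t₀
    apply Integrable.mono' (hmom.add (integrable_const |t₀|))
    · exact (((checkFn_measurable τ).comp
        (measurable_id.sub measurable_const)).aestronglyMeasurable)
    · refine Filter.Eventually.of_forall fun e => ?_
      have h00 : checkFn τ 0 = 0 := by simp [checkFn]
      have := (checkFn_lip hτ).dist_le_mul (e - t₀) 0
      rw [Real.dist_eq, Real.dist_eq, h00, sub_zero, sub_zero, NNReal.coe_one, one_mul] at this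
      calc ‖checkFn τ (e - t₀)‖ ≤ |e - t₀| := by rw [Real.norm_eq_abs]; exact this
        _ ≤ |e| + |t₀| := abs_sub _ _
  · exact ((Measurable.ite measurableSet_Iic measurable_const measurable_const).sub
      measurable_const).aestronglyMeasurable
  · refine Filter.Eventually.of_forall fun e => ?_
    have hsub : LipschitzWith 1 (fun t : ℝ => e - t) := by
      apply LipschitzWith.of_dist_le_mul
      intro x y
      rw [Real.dist_eq, Real.dist_eq, NNReal.coe_one, one_mul,
        show (e - x) - (e - y) = -(x - y) by ring, abs_neg]
    have : LipschitzWith 1 (fun t => F t e) := by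
      have h := (checkFn_lip hτ).comp hsub
      rw [mul_one] at h
      exact h
    simpa using this.lipschitzOnWith (s := Metric.ball t₀ 1)
  · -- a.e. differentiability
    have hae : ∀ᵐ e ∂m, e ≠ t₀ := by
      rw [ae_iff]
      simpa using ht₀
    filter_upwards [hae] with e he
    rcases lt_or_gt_of_ne he with hlt | hgt
    · -- e < t₀, so eventually e - t < 0, F t e = (e - t) * (τ - 1), deriv 1 - τ
      have hd : HasDerivAt (fun t => (e - t) * (τ - 1)) (1 - τ) t₀ := by
        have : HasDerivAt (fun t => (e - t) * (τ - 1)) (-1 * (τ - 1)) t₀ :=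
          ((hasDerivAt_id t₀).const_sub e).mul_const (τ - 1)
        simpa [neg_sub] using this
      have heq : (fun t => F t e) =ᶠ[nhds t₀] fun t => (e - t) * (τ - 1) := by
        have : Set.Ioi e ∈ nhds t₀ := Ioi_mem_nhds hlt
        filter_upwards [this] with t ht
        have : e - t ≤ 0 := by simp only [Set.mem_Ioi] at ht; linarith
        simp only [hF, checkFn, if_pos this]
      have : F' e = 1 - τ := by simp [hF', hlt.le]
      rw [this]
      exact hd.congr_of_eventuallyEq heq
    · have hd : HasDerivAt (fun t => (e - t) * τ) (-τ) t₀ := by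
        have : HasDerivAt (fun t => (e - t) * τ) (-1 * τ) t₀ :=
          ((hasDerivAt_id t₀).const_sub e).mul_const τ
        simpa using this
      have heq : (fun t => F t e) =ᶠ[nhds t₀] fun t => (e - t) * τ := by
        have : Set.Iio e ∈ nhds t₀ := Iio_mem_nhds hgt
        filter_upwards [this] with t ht
        have : ¬ (e - t ≤ 0) := by simp only [Set.mem_Iio] at ht; linarith
        simp only [hF, checkFn, if_neg this, sub_zero]
      have : F' e = -τ := by simp [hF', not_le.mpr hgt]
      rw [this]
      exact hd.congr_of_eventuallyEq heq
end

section
/- Lipschitz continuity of the conditional score covariance: define, for each β ∈ ℝ^d and coordinates j, k, S(β)_{jk} := ∫ x_j x_k (1{y ≤ ⟨x, β⟩} − τ)² dμ(x, y). Then for all β₁, β₂ ∈ ℝ^d and all j, k, |S(β₁)_{jk} − S(β₂)_{jk}| ≤ 2 M (∫ ‖x‖³ dν(x)) ‖β₁ − β₂‖. -/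
open MeasureTheory ProbabilityTheory
open scoped RealInnerProductSpace ENNReal

lemma qr_aux_coord_le {d : ℕ} (x : EuclideanSpace ℝ (Fin d)) (j : Fin d) : |x j| ≤ ‖x‖ := by
  rw [EuclideanSpace.norm_eq]
  have h1 : |x j| = Real.sqrt (|x j| ^ 2) := by rw [Real.sqrt_sq_eq_abs, abs_abs]
  rw [h1]
  apply Real.sqrt_le_sqrt
  have := Finset.single_le_sum (f := fun i => ‖x i‖ ^ 2) (fun i _ => sq_nonneg _)
    (Finset.mem_univ j)
  simpa [Real.norm_eq_abs] using this

/-- Lipschitz continuity of the conditional score covariance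
`S(β)_{jk} = ∫ x_j x_k (1{y ≤ ⟨x,β⟩} − τ)² dμ(x,y)`, `μ = ν ⊗ₖ κ`: with uniformly
`M`-Lipschitz conditional CDFs, `|S(β₁)_{jk} − S(β₂)_{jk}| ≤ 2M (∫‖x‖³ dν) ‖β₁ − β₂‖`. -/
theorem qr_score_covariance_lipschitz (d : ℕ) (τ : ℝ) (hτ : τ ∈ Set.Ioo (0 : ℝ) 1)
    (ν : Measure (EuclideanSpace ℝ (Fin d))) [IsProbabilityMeasure ν]
    (κ : Kernel (EuclideanSpace ℝ (Fin d)) ℝ) [IsMarkovKernel κ]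
    (hν3 : Integrable (fun x => ‖x‖ ^ 3) ν)
    (M : ℝ)
    (hLip : ∀ (x : EuclideanSpace ℝ (Fin d)) (s t : ℝ), s ≤ t →
      κ x (Set.Ioc s t) ≤ ENNReal.ofReal (M * (t - s))) :
    ∀ (β₁ β₂ : EuclideanSpace ℝ (Fin d)) (j k : Fin d),
      |(∫ z : EuclideanSpace ℝ (Fin d) × ℝ,
            z.1 j * z.1 k * ((if z.2 ≤ ⟪z.1, β₁⟫ then (1 : ℝ) else 0) - τ) ^ 2
            ∂(ν.compProd κ)) -
        (∫ z : EuclideanSpace ℝ (Fin d) × ℝ,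
            z.1 j * z.1 k * ((if z.2 ≤ ⟪z.1, β₂⟫ then (1 : ℝ) else 0) - τ) ^ 2
            ∂(ν.compProd κ))|
      ≤ 2 * M * (∫ x, ‖x‖ ^ 3 ∂ν) * ‖β₁ - β₂‖ := by
  intro β₁ β₂ j k
  obtain ⟨hτ0, hτ1⟩ := hτ
  -- M is nonnegative
  have hM : 0 ≤ M := by
    by_contra h
    push_neg at h
    have hzero : ∀ n : ℕ, κ (0 : EuclideanSpace ℝ (Fin d)) (Set.Ioc (-(n:ℝ)) (n:ℝ)) = 0 := by
      intro n
      have hst : (-(n:ℝ)) ≤ n := le_trans (neg_nonpos.2 n.cast_nonneg) n.cast_nonneg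
      refine le_antisymm (le_trans (hLip 0 _ _ hst) ?_) zero_le
      exact (ENNReal.ofReal_eq_zero.2 (by nlinarith [sub_nonneg.2 hst])).le
    have huniv : (Set.univ : Set ℝ) = ⋃ n : ℕ, Set.Ioc (-(n:ℝ)) (n:ℝ) := by
      ext y
      simp only [Set.mem_univ, Set.mem_iUnion, Set.mem_Ioc, true_iff]
      refine ⟨⌈|y|⌉₊ + 1, ?_, ?_⟩
      · push_cast
        nlinarith [Nat.le_ceil |y|, neg_abs_le y]
      · push_cast
        nlinarith [Nat.le_ceil |y|, le_abs_self y]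
    have h1 : κ (0 : EuclideanSpace ℝ (Fin d)) Set.univ = 1 := measure_univ
    rw [huniv] at h1
    have h2 : κ (0 : EuclideanSpace ℝ (Fin d)) (⋃ n : ℕ, Set.Ioc (-(n:ℝ)) (n:ℝ))
        ≤ ∑' n : ℕ, κ (0 : EuclideanSpace ℝ (Fin d)) (Set.Ioc (-(n:ℝ)) (n:ℝ)) :=
      measure_iUnion_le _
    rw [h1] at h2
    simp [hzero] at h2
  -- measurability
  have hmeas : ∀ β : EuclideanSpace ℝ (Fin d),
      Measurable (fun z : EuclideanSpace ℝ (Fin d) × ℝ =>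
        z.1 j * z.1 k * ((if z.2 ≤ ⟪z.1, β⟫ then (1 : ℝ) else 0) - τ) ^ 2) := by
    intro β
    have hS : MeasurableSet {z : EuclideanSpace ℝ (Fin d) × ℝ | z.2 ≤ ⟪z.1, β⟫} :=
      measurableSet_le measurable_snd
        ((continuous_fst.inner continuous_const).measurable)
    have hind : Measurable (fun z : EuclideanSpace ℝ (Fin d) × ℝ =>
        if z.2 ≤ ⟪z.1, β⟫ then (1 : ℝ) else 0) :=
      Measurable.ite hS measurable_const measurable_const
    have hcoord : ∀ i : Fin d, Measurable (fun z : EuclideanSpace ℝ (Fin d) × ℝ => z.1 i) :=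
      fun i => ((EuclideanSpace.proj i).continuous.comp continuous_fst).measurable
    exact ((hcoord j).mul (hcoord k)).mul ((hind.sub measurable_const).pow_const 2)
  -- integrability
  have hint : ∀ β : EuclideanSpace ℝ (Fin d),
      Integrable (fun z : EuclideanSpace ℝ (Fin d) × ℝ =>
        z.1 j * z.1 k * ((if z.2 ≤ ⟪z.1, β⟫ then (1 : ℝ) else 0) - τ) ^ 2)
        (ν.compProd κ) := by
    intro β
    have hmaj : Integrable (fun z : EuclideanSpace ℝ (Fin d) × ℝ => 1 + ‖z.1‖ ^ 3)
        (ν.compProd κ) := by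
      have hsm : AEStronglyMeasurable (fun z : EuclideanSpace ℝ (Fin d) × ℝ => 1 + ‖z.1‖ ^ 3)
          (ν.compProd κ) :=
        (measurable_const.add ((measurable_fst.norm).pow_const 3)).aestronglyMeasurable
      rw [Measure.integrable_compProd_iff hsm]
      refine ⟨Filter.Eventually.of_forall fun x => ?_, ?_⟩
      · exact integrable_const (1 + ‖x‖ ^ 3)
      have heq : (fun x : EuclideanSpace ℝ (Fin d) =>
          ∫ y, ‖1 + ‖x‖ ^ 3‖ ∂(κ x)) = fun x => 1 + ‖x‖ ^ 3 := by
        ext x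
        rw [integral_const]
        simp only [probReal_univ, measure_univ, ENNReal.toReal_one, one_smul]
        rw [Real.norm_of_nonneg (by positivity)]
      rw [heq]
      exact (integrable_const 1).add hν3
    refine hmaj.mono' (hmeas β).aestronglyMeasurable ?_
    filter_upwards with z
    have h1 : |z.1 j| ≤ ‖z.1‖ := qr_aux_coord_le z.1 j
    have h2 : |z.1 k| ≤ ‖z.1‖ := qr_aux_coord_le z.1 k
    have h3 : ((if z.2 ≤ ⟪z.1, β⟫ then (1 : ℝ) else 0) - τ) ^ 2 ≤ 1 := by
      split <;> nlinarith
    have hn : (0:ℝ) ≤ ‖z.1‖ := norm_nonneg _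
    rw [Real.norm_eq_abs, abs_mul, abs_mul, abs_pow, sq_abs]
    nlinarith [abs_nonneg (z.1 j), abs_nonneg (z.1 k), sq_nonneg ((if z.2 ≤ ⟪z.1, β⟫ then (1:ℝ) else 0) - τ),
      mul_nonneg hn (sq_nonneg (‖z.1‖ - 1)), sq_nonneg (‖z.1‖ - 1/2),
      mul_le_mul h1 h2 (abs_nonneg _) hn]
  -- main argument
  rw [← integral_sub (hint β₁) (hint β₂)]
  have hsub : Integrable (fun z : EuclideanSpace ℝ (Fin d) × ℝ =>
      z.1 j * z.1 k * ((if z.2 ≤ ⟪z.1, β₁⟫ then (1:ℝ) else 0) - τ) ^ 2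
        - z.1 j * z.1 k * ((if z.2 ≤ ⟪z.1, β₂⟫ then (1:ℝ) else 0) - τ) ^ 2)
      (ν.compProd κ) := (hint β₁).sub (hint β₂)
  rw [Measure.integral_compProd hsub]
  have hIint : ∀ (x : EuclideanSpace ℝ (Fin d)) (c : ℝ),
      Integrable (fun y => if y ≤ c then (1:ℝ) else 0) (κ x) := by
    intro x c
    have : (fun y => if y ≤ c then (1:ℝ) else 0) = (Set.Iic c).indicator (fun _ => 1) := by
      ext y; simp [Set.indicator_apply, Set.mem_Iic]
    rw [this]
    exact (integrable_const 1).indicator measurableSet_Iic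
  have hIval : ∀ (x : EuclideanSpace ℝ (Fin d)) (c : ℝ),
      ∫ y, (if y ≤ c then (1:ℝ) else 0) ∂(κ x) = (κ x (Set.Iic c)).toReal := by
    intro x c
    have : (fun y => if y ≤ c then (1:ℝ) else 0) = (Set.Iic c).indicator (fun _ => 1) := by
      ext y; simp [Set.indicator_apply, Set.mem_Iic]
    rw [this, integral_indicator measurableSet_Iic]
    simp; rfl
  have hkey : ∀ (x : EuclideanSpace ℝ (Fin d)) (s t : ℝ), s ≤ t →
      (κ x (Set.Iic t)).toReal - (κ x (Set.Iic s)).toReal ∈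
        Set.Icc 0 (M * (t - s)) := by
    intro x s t hst
    have hsplit : κ x (Set.Iic s) + κ x (Set.Ioc s t) = κ x (Set.Iic t) := by
      rw [← measure_union (Set.Iic_disjoint_Ioc le_rfl) measurableSet_Ioc,
        Set.Iic_union_Ioc_eq_Iic hst]
    have heq : (κ x (Set.Iic t)).toReal
        = (κ x (Set.Iic s)).toReal + (κ x (Set.Ioc s t)).toReal := by
      rw [← hsplit, ENNReal.toReal_add (measure_ne_top _ _) (measure_ne_top _ _)]
    have hle : (κ x (Set.Ioc s t)).toReal ≤ M * (t - s) :=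
      ENNReal.toReal_le_of_le_ofReal (mul_nonneg hM (sub_nonneg.2 hst)) (hLip x s t hst)
    exact ⟨by rw [heq]; simpa using ENNReal.toReal_nonneg, by rw [heq]; linarith⟩
  have hbound : ∀ x : EuclideanSpace ℝ (Fin d),
      ‖∫ y, (x j * x k * ((if y ≤ ⟪x, β₁⟫ then (1:ℝ) else 0) - τ) ^ 2
          - x j * x k * ((if y ≤ ⟪x, β₂⟫ then (1:ℝ) else 0) - τ) ^ 2) ∂(κ x)‖
        ≤ M * ‖x‖ ^ 3 * ‖β₁ - β₂‖ := by
    intro x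
    set a := ⟪x, β₁⟫ with ha
    set b := ⟪x, β₂⟫ with hb
    have hpt : ∀ y : ℝ,
        x j * x k * ((if y ≤ a then (1:ℝ) else 0) - τ) ^ 2
          - x j * x k * ((if y ≤ b then (1:ℝ) else 0) - τ) ^ 2
        = (x j * x k * (1 - 2*τ)) *
            ((if y ≤ a then (1:ℝ) else 0) - (if y ≤ b then (1:ℝ) else 0)) := by
      intro y
      by_cases h1 : y ≤ a <;> by_cases h2 : y ≤ b <;> simp [h1, h2] <;> ring
    have hval : ∫ y, (x j * x k * ((if y ≤ a then (1:ℝ) else 0) - τ) ^ 2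
          - x j * x k * ((if y ≤ b then (1:ℝ) else 0) - τ) ^ 2) ∂(κ x)
        = (x j * x k * (1 - 2*τ)) *
            ((κ x (Set.Iic a)).toReal - (κ x (Set.Iic b)).toReal) := by
      simp_rw [hpt]
      rw [integral_const_mul, integral_sub (hIint x a) (hIint x b), hIval, hIval]
    rw [hval]
    have hdiff : |(κ x (Set.Iic a)).toReal - (κ x (Set.Iic b)).toReal| ≤ M * |a - b| := by
      rcases le_total b a with h | h
      · obtain ⟨h0, h1⟩ := hkey x b a h
        rw [abs_of_nonneg h0, abs_of_nonneg (sub_nonneg.2 h)]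
        linarith
      · obtain ⟨h0, h1⟩ := hkey x a b h
        rw [abs_sub_comm, abs_of_nonneg h0, abs_sub_comm, abs_of_nonneg (sub_nonneg.2 h)]
        linarith
    have hab : |a - b| ≤ ‖x‖ * ‖β₁ - β₂‖ := by
      have : a - b = ⟪x, β₁ - β₂⟫ := by rw [inner_sub_right]
      rw [this]
      exact abs_real_inner_le_norm x (β₁ - β₂)
    have hc : |x j * x k * (1 - 2*τ)| ≤ ‖x‖ * ‖x‖ := by
      rw [abs_mul, abs_mul]
      have h12 : |1 - 2*τ| ≤ 1 := by rw [abs_le]; constructor <;> linarith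
      calc |x j| * |x k| * |1 - 2*τ| ≤ (‖x‖ * ‖x‖) * 1 := by
            apply mul_le_mul _ h12 (abs_nonneg _) (by positivity)
            exact mul_le_mul (qr_aux_coord_le x j) (qr_aux_coord_le x k)
              (abs_nonneg _) (norm_nonneg _)
        _ = ‖x‖ * ‖x‖ := by ring
    have hdiff2 : |(κ x (Set.Iic a)).toReal - (κ x (Set.Iic b)).toReal|
        ≤ M * (‖x‖ * ‖β₁ - β₂‖) :=
      hdiff.trans (mul_le_mul_of_nonneg_left hab hM)
    rw [Real.norm_eq_abs, abs_mul]
    calc |x j * x k * (1 - 2*τ)| * |(κ x (Set.Iic a)).toReal - (κ x (Set.Iic b)).toReal|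
        ≤ (‖x‖ * ‖x‖) * (M * (‖x‖ * ‖β₁ - β₂‖)) :=
          mul_le_mul hc hdiff2 (abs_nonneg _) (by positivity)
      _ = M * ‖x‖ ^ 3 * ‖β₁ - β₂‖ := by ring
  have hh : Integrable (fun x : EuclideanSpace ℝ (Fin d) => M * ‖x‖ ^ 3 * ‖β₁ - β₂‖) ν :=
    (hν3.const_mul M).mul_const _
  have hmain : ‖∫ x, ∫ y, (x j * x k * ((if y ≤ ⟪x, β₁⟫ then (1:ℝ) else 0) - τ) ^ 2
        - x j * x k * ((if y ≤ ⟪x, β₂⟫ then (1:ℝ) else 0) - τ) ^ 2) ∂(κ x) ∂ν‖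
      ≤ ∫ x, M * ‖x‖ ^ 3 * ‖β₁ - β₂‖ ∂ν :=
    norm_integral_le_of_norm_le hh (Filter.Eventually.of_forall hbound)
  rw [← Real.norm_eq_abs]
  refine le_trans hmain ?_
  rw [integral_mul_const, integral_const_mul]
  have hI : 0 ≤ ∫ x, ‖x‖ ^ 3 ∂ν := integral_nonneg fun x => by positivity
  have hn : (0:ℝ) ≤ ‖β₁ - β₂‖ := norm_nonneg _
  nlinarith [mul_nonneg (mul_nonneg hM hI) hn]
end
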